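/- arXiv:0911.4689 — 4 statements merged into one kernel-verified Lean document; each statement's English description precedes it below -/
import Mathlib

section
/- If u_1, ..., u_{m+1} is an orthonormal system in an inner product space V, Ω is an alternating (m+1)-form on V with comass at most 1 (i.e. |Ω(v_1,...,v_{m+1})| ≤ 1 for every orthonormal system v_i), and Ω(u_1,...,u_{m+1}) = cos θ for some θ ∈ [0,π], then for every unit vector w orthogonal to all u_i and every index j, |Ω(w, u_1, ..., û_j, ..., u_{m+1})| ≤ sin θ, where û_j denotes omission of u_j. -/
open RealInnerProductSpace

/-- If `u` is an orthonormal system of `m+1` vectors in a real inner product space `V`,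
`Ω` is an alternating `(m+1)`-form of comass at most `1`, `Ω u = cos θ` with `θ ∈ [0, π]`,
then for every unit vector `w` orthogonal to all the `u i` and every index `j`,
`|Ω(w, u₁, …, ûⱼ, …, u_{m+1})| ≤ sin θ` (here the omission of `uⱼ` and insertion of `w`
is encoded by replacing `uⱼ` with `w`, which changes the value only by a sign). -/
theorem comass_bound_on_replaced_orthonormal_system
    {V : Type*} [NormedAddCommGroup V] [InnerProductSpace ℝ V]
    {m : ℕ} (Ω : AlternatingMap ℝ V ℝ (Fin (m + 1)))
    (hcomass : ∀ v : Fin (m + 1) → V, Orthonormal ℝ v → |Ω v| ≤ 1)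
    (u : Fin (m + 1) → V) (hu : Orthonormal ℝ u)
    (θ : ℝ) (hθ0 : 0 ≤ θ) (hθπ : θ ≤ Real.pi) (hΩu : Ω u = Real.cos θ)
    (w : V) (hw : ‖w‖ = 1) (hwu : ∀ i, ⟪w, u i⟫ = 0) (j : Fin (m + 1)) :
    |Ω (Function.update u j w)| ≤ Real.sin θ := by
  set c := Real.cos θ with hc
  set S := Ω (Function.update u j w) with hS
  have hsin : Real.sin θ = Real.sqrt (1 - c ^ 2) := by
    rw [hc, ← Real.sin_sq_add_cos_sq θ]
    ring_nf
    rw [Real.sqrt_sq (Real.sin_nonneg_of_nonneg_of_le_pi hθ0 hθπ)]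
  -- key claim : c^2 + S^2 ≤ 1
  have key : c ^ 2 + S ^ 2 ≤ 1 := by
    set r : ℝ := Real.sqrt (c ^ 2 + S ^ 2) with hr
    have hr2 : r ^ 2 = c ^ 2 + S ^ 2 := Real.sq_sqrt (by positivity)
    rcases eq_or_lt_of_le (Real.sqrt_nonneg (c ^ 2 + S ^ 2)) with h0 | h0
    · nlinarith
    · -- r > 0
      set a : ℝ := c / r with ha
      set b : ℝ := S / r with hb
      have hrne : r ≠ 0 := ne_of_gt h0
      have hab : a ^ 2 + b ^ 2 = 1 := by
        have h : a ^ 2 + b ^ 2 = (c ^ 2 + S ^ 2) / r ^ 2 := by rw [ha, hb]; ring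
        rw [h, ← hr2, div_self (pow_ne_zero 2 hrne)]
      set x : V := a • u j + b • w with hx
      have hxn : ‖x‖ = 1 := by
        have h1 : ⟪x, x⟫ = a ^ 2 * ⟪u j, u j⟫ + (a * b) * ⟪u j, w⟫
            + (b * a) * ⟪w, u j⟫ + b ^ 2 * ⟪w, w⟫ := by
          simp only [hx, inner_add_left, inner_add_right, real_inner_smul_left,
            real_inner_smul_right]
          ring
        have hujw : ⟪u j, w⟫ = 0 := by rw [real_inner_comm]; exact hwu j
        have huj : ⟪u j, u j⟫ = 1 := real_inner_self_eq_norm_sq (u j) ▸ by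
          rw [hu.1 j]; norm_num
        have hww : ⟪w, w⟫ = 1 := real_inner_self_eq_norm_sq w ▸ by
          rw [hw]; norm_num
        have : ⟪x, x⟫ = 1 := by rw [h1, hujw, hwu j, huj, hww]; nlinarith
        have := real_inner_self_eq_norm_sq x ▸ this
        nlinarith [norm_nonneg x]
      have hxu : ∀ i, i ≠ j → ⟪x, u i⟫ = 0 := by
        intro i hi
        have : ⟪u j, u i⟫ = 0 := hu.2 (Ne.symm hi)
        simp [hx, inner_add_left, real_inner_smul_left, this, hwu i]
      have hon : Orthonormal ℝ (Function.update u j x) := by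
        constructor
        · intro i
          rcases eq_or_ne i j with rfl | h
          · simpa using hxn
          · simpa [Function.update_of_ne h] using hu.1 i
        · intro i k hik
          rcases eq_or_ne i j with rfl | hi
          · have hk : k ≠ i := fun h => hik h.symm
            rw [Function.update_self, Function.update_of_ne hk]
            exact hxu k hk
          · rcases eq_or_ne k j with rfl | hk
            · rw [Function.update_self, Function.update_of_ne hi, real_inner_comm]
              exact hxu i hi
            · rw [Function.update_of_ne hi, Function.update_of_ne hk]
              exact hu.2 hik
      have hval : Ω (Function.update u j x) = a * c + b * S := by
        have h1 : Function.update u j (a • u j) =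
            fun i => Function.update u j (a • u j) i := rfl
        calc Ω (Function.update u j x)
            = Ω (Function.update u j (a • u j)) + Ω (Function.update u j (b • w)) := by
              rw [hx, Ω.map_update_add]
          _ = a • Ω (Function.update u j (u j)) + b • Ω (Function.update u j w) := by
              rw [Ω.map_update_smul, Ω.map_update_smul]
          _ = a * c + b * S := by
              rw [Function.update_eq_self, hΩu]; simp [smul_eq_mul, hS, hc]
      have hle := hcomass _ hon
      rw [hval] at hle
      have habS : a * c + b * S = r := by
        have h : a * c + b * S = (c ^ 2 + S ^ 2) / r := by rw [ha, hb]; ring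
        rw [h, ← hr2, sq, mul_div_assoc, div_self hrne, mul_one]
      rw [habS] at hle
      have : r ≤ 1 := le_of_abs_le hle
      nlinarith
  -- conclude
  rw [hsin]
  have h1 : S ^ 2 ≤ 1 - c ^ 2 := by linarith
  calc |S| = Real.sqrt (S ^ 2) := by rw [Real.sqrt_sq_eq_abs]
    _ ≤ Real.sqrt (1 - c ^ 2) := Real.sqrt_le_sqrt h1
end

section
/- Let Ω be an alternating (m+1)-form of comass ≤ 1 on an inner product space V, and let u_1, ..., u_m, ν be an orthonormal system with Ω(ν, u_1, ..., u_m) = 1. Then for every vector W orthogonal to the span of {u_1,...,u_m}: (a) Ω(W, ν, u_1, ..., u_{m-1}) = 0 (and similarly with any m−1 of the u_i), and (b) Ω(W, u_1, ..., u_m) = ⟨W, ν⟩. -/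
open RealInnerProductSpace

private lemma exists_cos_sin (x y : ℝ) (h : x ^ 2 + y ^ 2 = 1) :
    ∃ θ : ℝ, Real.cos θ = x ∧ Real.sin θ = y := by
  have hx1 : -1 ≤ x := by nlinarith [sq_nonneg y]
  have hx2 : x ≤ 1 := by nlinarith [sq_nonneg y]
  rcases le_or_gt 0 y with hy | hy
  · refine ⟨Real.arccos x, Real.cos_arccos hx1 hx2, ?_⟩
    rw [Real.sin_arccos, show 1 - x ^ 2 = y ^ 2 by nlinarith]
    exact Real.sqrt_sq hy
  · refine ⟨-Real.arccos x, ?_, ?_⟩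
    · rw [Real.cos_neg]; exact Real.cos_arccos hx1 hx2
    · rw [Real.sin_neg, Real.sin_arccos, show 1 - x ^ 2 = y ^ 2 by nlinarith,
        Real.sqrt_sq_eq_abs, abs_of_neg hy, neg_neg]

private lemma amp_le {a b : ℝ} (h : ∀ θ : ℝ, |Real.cos θ * a + Real.sin θ * b| ≤ 1) :
    a ^ 2 + b ^ 2 ≤ 1 := by
  rcases eq_or_ne (a ^ 2 + b ^ 2) 0 with h0 | h0
  · rw [h0]; norm_num
  · have hpos : 0 < a ^ 2 + b ^ 2 := lt_of_le_of_ne (by positivity) (Ne.symm h0)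
    set r := Real.sqrt (a ^ 2 + b ^ 2) with hr
    have hr0 : 0 < r := Real.sqrt_pos.mpr hpos
    have hr2 : r ^ 2 = a ^ 2 + b ^ 2 := Real.sq_sqrt (le_of_lt hpos)
    obtain ⟨θ, hc, hs⟩ := exists_cos_sin (a / r) (b / r) (by
      field_simp
      linarith [hr2])
    have hb := h θ
    rw [hc, hs] at hb
    have heq : a / r * a + b / r * b = r := by
      field_simp
      nlinarith [hr2]
    rw [heq, abs_of_pos hr0] at hb
    nlinarith [hr2]

private lemma cons_comb {V : Type*} [NormedAddCommGroup V] [InnerProductSpace ℝ V] {n : ℕ}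
    (Ω : AlternatingMap ℝ V ℝ (Fin (n + 1))) (x y : V) (a b : ℝ) (t : Fin n → V) :
    Ω (Fin.cons (a • x + b • y) t) = a * Ω (Fin.cons x t) + b * Ω (Fin.cons y t) := by
  rw [show (Fin.cons (a • x + b • y) t : Fin (n+1) → V)
      = Function.update (Fin.cons x t) 0 (a • x + b • y) from (Fin.update_cons_zero _ _ _).symm]
  rw [Ω.map_update_add, Ω.map_update_smul, Ω.map_update_smul, Fin.update_cons_zero, Fin.update_cons_zero]
  simp [smul_eq_mul]

private lemma rot_zero {V : Type*} [NormedAddCommGroup V] [InnerProductSpace ℝ V] {n : ℕ}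
    (Ω : AlternatingMap ℝ V ℝ (Fin (n + 1)))
    (hcomass : ∀ v : Fin (n + 1) → V, Orthonormal ℝ v → |Ω v| ≤ 1)
    (x w : V) (t : Fin n → V) (ε : ℝ) (hε : ε = 1 ∨ ε = -1)
    (hx : Ω (Fin.cons x t) = ε)
    (hON' : ∀ a b : ℝ, a ^ 2 + b ^ 2 = 1 → Orthonormal ℝ (Fin.cons (a • x + b • w) t)) :
    Ω (Fin.cons w t) = 0 := by
  set c := Ω (Fin.cons w t) with hcdef
  have hbound : ∀ θ : ℝ, |Real.cos θ * ε + Real.sin θ * c| ≤ 1 := by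
    intro θ
    have hONθ := hON' (Real.cos θ) (Real.sin θ) (by
      rw [add_comm]; exact Real.sin_sq_add_cos_sq θ)
    have h1 := hcomass _ hONθ
    rwa [cons_comb Ω x w (Real.cos θ) (Real.sin θ) t, hx] at h1
  have h2 := amp_le hbound
  have hε2 : ε ^ 2 = 1 := by rcases hε with rfl | rfl <;> norm_num
  have hc2 : c ^ 2 = 0 := le_antisymm (by nlinarith) (sq_nonneg c)
  exact sq_eq_zero_iff.mp hc2

/-- Let `Ω` be an alternating `(m+1)`-form of comass `≤ 1` on a real inner product space `V`,
and let `ν, u₁, …, u_m` be an orthonormal system with `Ω(ν, u₁, …, u_m) = 1`.  Then for every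
vector `W` orthogonal to all the `u i`:
(a) `Ω(W, u₁, …, ν, …, u_m) = 0` where `ν` replaces any one `u j` (equivalently, up to sign,
`Ω(W, ν, u₁, …, ûⱼ, …, u_m) = 0` for any omission of one of the `u i`), and
(b) `Ω(W, u₁, …, u_m) = ⟪W, ν⟫`. -/
theorem calibrated_extended_tangent_space_contractions
    {V : Type*} [NormedAddCommGroup V] [InnerProductSpace ℝ V]
    {m : ℕ} (Ω : AlternatingMap ℝ V ℝ (Fin (m + 1)))
    (hcomass : ∀ v : Fin (m + 1) → V, Orthonormal ℝ v → |Ω v| ≤ 1)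
    (ν : V) (u : Fin m → V) (hON : Orthonormal ℝ (Fin.cons ν u : Fin (m + 1) → V))
    (hcal : Ω (Fin.cons ν u) = 1)
    (W : V) (hW : ∀ i, ⟪W, u i⟫ = 0) :
    (∀ j : Fin m, Ω (Fin.cons W (Function.update u j ν)) = 0) ∧
    Ω (Fin.cons W u) = ⟪W, ν⟫ := by
  have hfacts := orthonormal_iff_ite.mp hON
  have hνν : ⟪ν, ν⟫ = 1 := by simpa using hfacts 0 0
  have hνu : ∀ i, ⟪ν, u i⟫ = 0 := fun i => by
    simpa [(Fin.succ_ne_zero i).symm] using hfacts 0 i.succ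
  have huν : ∀ i, ⟪u i, ν⟫ = 0 := fun i => by
    simpa [Fin.succ_ne_zero i] using hfacts i.succ 0
  have huu : ∀ i j, ⟪u i, u j⟫ = if i = j then (1 : ℝ) else 0 := fun i j => by
    simpa [Fin.succ_inj] using hfacts i.succ j.succ
  -- the swap computation
  have hswap : ∀ j : Fin m, Ω (Fin.cons (u j) (Function.update u j ν)) = -1 := by
    intro j
    have htup : (Fin.cons (u j) (Function.update u j ν) : Fin (m+1) → V)
        = (Fin.cons ν u : Fin (m+1) → V) ∘ Equiv.swap 0 j.succ := by
      funext i
      refine Fin.cases ?_ ?_ i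
      · simp [Equiv.swap_apply_left]
      · intro k
        rcases eq_or_ne k j with rfl | hk
        · simp [Equiv.swap_apply_right]
        · have h1 : (k.succ : Fin (m+1)) ≠ 0 := Fin.succ_ne_zero k
          have h2 : (k.succ : Fin (m+1)) ≠ j.succ := by simpa [Fin.succ_inj] using hk
          simp [Function.comp, Equiv.swap_apply_of_ne_of_ne h1 h2, Function.update_of_ne hk]
    rw [htup, Ω.map_swap _ (Ne.symm (Fin.succ_ne_zero j)), hcal]
  -- key lemma for w perpendicular to everything
  have key : ∀ w : V, ⟪w, ν⟫ = 0 → (∀ i, ⟪w, u i⟫ = 0) →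
      Ω (Fin.cons w u) = 0 ∧ ∀ j, Ω (Fin.cons w (Function.update u j ν)) = 0 := by
    intro w h1 h2
    rcases eq_or_ne w 0 with rfl | hne
    · constructor
      · rw [show (Fin.cons (0:V) u : Fin (m+1) → V)
            = Function.update (Fin.cons ν u) 0 0 from (Fin.update_cons_zero _ _ _).symm]
        exact Ω.map_update_zero _ _
      · intro j
        rw [show (Fin.cons (0:V) (Function.update u j ν) : Fin (m+1) → V)
            = Function.update (Fin.cons ν (Function.update u j ν)) 0 0
            from (Fin.update_cons_zero _ _ _).symm]
        exact Ω.map_update_zero _ _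
    · set nn := ‖w‖ with hnn
      have hnn0 : nn ≠ 0 := norm_ne_zero_iff.mpr hne
      set w1 := nn⁻¹ • w with hw1def
      have hw1ν : ⟪w1, ν⟫ = 0 := by simp [hw1def, real_inner_smul_left, h1]
      have hνw1 : ⟪ν, w1⟫ = 0 := by rw [real_inner_comm]; exact hw1ν
      have hw1u : ∀ i, ⟪w1, u i⟫ = 0 := fun i => by
        simp [hw1def, real_inner_smul_left, h2 i]
      have huw1 : ∀ i, ⟪u i, w1⟫ = 0 := fun i => by rw [real_inner_comm]; exact hw1u i
      have hw1w1 : ⟪w1, w1⟫ = 1 := by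
        rw [hw1def, real_inner_smul_left, real_inner_smul_right,
          real_inner_self_eq_norm_sq, ← hnn]
        field_simp
      have hweq : w = nn • w1 := by rw [hw1def, smul_smul, mul_inv_cancel₀ hnn0, one_smul]
      have hmain : Ω (Fin.cons w1 u) = 0 := by
        refine rot_zero Ω hcomass ν w1 u 1 (Or.inl rfl) hcal ?_
        intro a b hab
        rw [orthonormal_iff_ite]
        intro i k
        refine Fin.cases ?_ ?_ i
        · refine Fin.cases ?_ ?_ k
          · simp only [Fin.cons_zero, if_pos rfl, inner_add_left, inner_add_right,
              real_inner_smul_left, real_inner_smul_right, hνν, hνw1, hw1ν, hw1w1]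
            norm_num
            nlinarith
          · intro k'
            simp only [Fin.cons_zero, Fin.cons_succ, inner_add_left,
              real_inner_smul_left, hνu k', hw1u k', (Fin.succ_ne_zero k').symm, if_neg,
              mul_zero, add_zero]
            simp [(Fin.succ_ne_zero k').symm]
        · intro i'
          refine Fin.cases ?_ ?_ k
          · simp only [Fin.cons_zero, Fin.cons_succ, inner_add_right,
              real_inner_smul_right, huν i', huw1 i', mul_zero, add_zero]
            simp [Fin.succ_ne_zero i']
          · intro k'
            simp only [Fin.cons_succ, huu i' k', Fin.succ_inj]
      have hmain2 : ∀ j, Ω (Fin.cons w1 (Function.update u j ν)) = 0 := by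
        intro j
        refine rot_zero Ω hcomass (u j) w1 (Function.update u j ν) (-1) (Or.inr rfl)
          (hswap j) ?_
        intro a b hab
        rw [orthonormal_iff_ite]
        intro i k
        refine Fin.cases ?_ ?_ i
        · refine Fin.cases ?_ ?_ k
          · simp only [Fin.cons_zero, if_pos rfl, inner_add_left, inner_add_right,
              real_inner_smul_left, real_inner_smul_right, huu j j, if_pos rfl,
              huw1 j, hw1u j, hw1w1]
            norm_num
            nlinarith
          · intro k'
            rcases eq_or_ne k' j with rfl | hk'
            · simp only [Fin.cons_zero, Fin.cons_succ, Function.update_self,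
                inner_add_left, real_inner_smul_left, huν k', hw1ν, mul_zero, add_zero]
              simp [(Fin.succ_ne_zero k').symm]
            · simp only [Fin.cons_zero, Fin.cons_succ, Function.update_of_ne hk',
                inner_add_left, real_inner_smul_left, huu j k', hw1u k',
                if_neg (Ne.symm hk'), mul_zero, add_zero]
              simp [(Fin.succ_ne_zero k').symm]
        · intro i'
          refine Fin.cases ?_ ?_ k
          · rcases eq_or_ne i' j with rfl | hi'
            · simp only [Fin.cons_zero, Fin.cons_succ, Function.update_self,
                inner_add_right, real_inner_smul_right, hνu i', hνw1, mul_zero, add_zero]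
              simp [Fin.succ_ne_zero i']
            · simp only [Fin.cons_zero, Fin.cons_succ, Function.update_of_ne hi',
                inner_add_right, real_inner_smul_right, huu i' j, if_neg hi',
                huw1 i', mul_zero, add_zero]
              simp [Fin.succ_ne_zero i']
          · intro k'
            simp only [Fin.cons_succ]
            rcases eq_or_ne i' j with rfl | hi'
            · rcases eq_or_ne k' i' with rfl | hk'
              · simp [hνν, show ‖ν‖ = 1 from by simpa using hON.1 0]
              · simp only [Function.update_self, Function.update_of_ne hk', hνu k']
                simp [Fin.succ_inj, (Ne.symm hk' : ¬ (i' = k'))]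
            · rcases eq_or_ne k' j with rfl | hk'
              · simp only [Function.update_self, Function.update_of_ne hi', huν i']
                simp [Fin.succ_inj, hi']
              · simp only [Function.update_of_ne hi', Function.update_of_ne hk',
                  huu i' k', Fin.succ_inj]
      constructor
      · rw [hweq, show (Fin.cons (nn • w1) u : Fin (m+1) → V)
            = Fin.cons (nn • w1 + (0:ℝ) • w1) u by simp]
        rw [cons_comb, hmain]
        ring
      · intro j
        rw [hweq, show (Fin.cons (nn • w1) (Function.update u j ν) : Fin (m+1) → V)
            = Fin.cons (nn • w1 + (0:ℝ) • w1) (Function.update u j ν) by simp]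
        rw [cons_comb, hmain2 j]
        ring
  -- decompose W
  set c := ⟪W, ν⟫ with hc
  have hWdec : W = c • ν + (1:ℝ) • (W - c • ν) := by simp
  have hwν : ⟪W - c • ν, ν⟫ = 0 := by
    simp [inner_sub_left, real_inner_smul_left, hνν, show ‖ν‖ = 1 from by simpa using hON.1 0, hc]
  have hwu : ∀ i, ⟪W - c • ν, u i⟫ = 0 := fun i => by
    simp [inner_sub_left, real_inner_smul_left, hνu i, hW i]
  obtain ⟨hk1, hk2⟩ := key (W - c • ν) hwν hwu
  constructor
  · intro j
    rw [hWdec, cons_comb, hk2 j, mul_zero, add_zero]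
    have : Ω (Fin.cons ν (Function.update u j ν)) = 0 := by
      refine Ω.map_eq_zero_of_eq _ (i := 0) (j := j.succ) ?_ (Ne.symm (Fin.succ_ne_zero j))
      simp
    rw [this, mul_zero]
  · rw [hWdec, cons_comb, hk1, mul_zero, add_zero, hcal, mul_one]
end

section
/- Let Ω be an alternating (m+1)-form of comass ≤ 1 on an inner product space V, with an orthonormal system ν, u_1, ..., u_m satisfying Ω(ν, u_1, ..., u_m) = 1. Then ν is the unique unit vector in the orthogonal complement of span{u_1,...,u_m} with this property: if ν' is another unit vector orthogonal to all u_i with Ω(ν', u_1, ..., u_m) = 1, then ν' = ν. -/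
open RealInnerProductSpace

lemma orthonormal_cons_aux {V : Type*} [NormedAddCommGroup V] [InnerProductSpace ℝ V]
    {m : ℕ} {u : Fin m → V} {w : V} (hu : Orthonormal ℝ u) (hw : ‖w‖ = 1)
    (h : ∀ i, ⟪w, u i⟫ = 0) : Orthonormal ℝ (Fin.cons w u : Fin (m + 1) → V) := by
  rw [orthonormal_iff_ite] at hu ⊢
  intro i j
  induction i using Fin.cases with
  | zero =>
    induction j using Fin.cases with
    | zero => simp [real_inner_self_eq_norm_sq, hw]
    | succ j => simp [h j, (Fin.succ_ne_zero j).symm]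
  | succ i =>
    induction j using Fin.cases with
    | zero => simp [real_inner_comm, h i, Fin.succ_ne_zero i]
    | succ j => simpa [Fin.succ_inj] using hu i j

/-- Let `Ω` be an alternating `(m+1)`-form of comass `≤ 1` on a real inner product space `V`,
with an orthonormal system `ν, u₁, …, u_m` satisfying `Ω(ν, u₁, …, u_m) = 1`.  Then `ν` is the
unique unit vector orthogonal to all the `u i` with this property: if `ν'` is another unit
vector orthogonal to all the `u i` with `Ω(ν', u₁, …, u_m) = 1`, then `ν' = ν`. -/
theorem uniqueness_of_calibrating_unit_normal
    {V : Type*} [NormedAddCommGroup V] [InnerProductSpace ℝ V]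
    {m : ℕ} (Ω : AlternatingMap ℝ V ℝ (Fin (m + 1)))
    (hcomass : ∀ v : Fin (m + 1) → V, Orthonormal ℝ v → |Ω v| ≤ 1)
    (u : Fin m → V) (ν ν' : V)
    (hON : Orthonormal ℝ (Fin.cons ν u : Fin (m + 1) → V))
    (hON' : Orthonormal ℝ (Fin.cons ν' u : Fin (m + 1) → V))
    (hcal : Ω (Fin.cons ν u) = 1) (hcal' : Ω (Fin.cons ν' u) = 1) :
    ν' = ν := by
  classical
  have hu : Orthonormal ℝ u := by
    rw [orthonormal_iff_ite] at hON ⊢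
    intro i j
    simpa [Fin.succ_inj] using hON i.succ j.succ
  have hνnorm : ‖ν‖ = 1 := by simpa using hON.1 0
  have hν'norm : ‖ν'‖ = 1 := by simpa using hON'.1 0
  have hνu : ∀ i, ⟪ν, u i⟫ = 0 := fun i => by
    simpa using hON.2 (show (0 : Fin (m + 1)) ≠ i.succ from (Fin.succ_ne_zero i).symm)
  have hν'u : ∀ i, ⟪ν', u i⟫ = 0 := fun i => by
    simpa using hON'.2 (show (0 : Fin (m + 1)) ≠ i.succ from (Fin.succ_ne_zero i).symm)
  have hsum : Ω (Fin.cons (ν + ν') u) = 2 := by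
    have h := Ω.map_update_add (Fin.cons ν u) 0 ν ν'
    rw [Fin.update_cons_zero, Fin.update_cons_zero, Fin.update_cons_zero] at h
    rw [h, hcal, hcal']; norm_num
  have hne : ν + ν' ≠ 0 := by
    intro h
    have h0 : Ω (Fin.cons (ν + ν') u) = 0 := Ω.map_coord_zero 0 (by simp [h])
    rw [hsum] at h0; norm_num at h0
  set s : ℝ := ‖ν + ν'‖ with hs
  have hspos : 0 < s := norm_pos_iff.mpr hne
  have hwnorm : ‖s⁻¹ • (ν + ν')‖ = 1 := by
    rw [norm_smul, Real.norm_eq_abs, abs_of_pos (inv_pos.mpr hspos), ← hs,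
      inv_mul_cancel₀ hspos.ne']
  have hONw : Orthonormal ℝ (Fin.cons (s⁻¹ • (ν + ν')) u : Fin (m + 1) → V) := by
    refine orthonormal_cons_aux hu hwnorm fun i => ?_
    rw [inner_smul_left, inner_add_left, hνu i, hν'u i]
    simp
  have hΩw : Ω (Fin.cons (s⁻¹ • (ν + ν')) u) = s⁻¹ * 2 := by
    have h := Ω.map_update_smul (Fin.cons (ν + ν') u) 0 s⁻¹ (ν + ν')
    rw [Fin.update_cons_zero, Fin.update_cons_zero] at h
    rw [h, hsum, smul_eq_mul]
  have hle : s⁻¹ * 2 ≤ 1 := by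
    have := hcomass _ hONw
    rw [hΩw] at this
    exact le_of_abs_le this
  have h2s : 2 ≤ s := by
    have h' := mul_le_mul_of_nonneg_right hle hspos.le
    rw [one_mul, mul_right_comm, inv_mul_cancel₀ hspos.ne', one_mul] at h'
    exact h'
  have hpar := parallelogram_law_with_norm ℝ ν ν'
  rw [hνnorm, hν'norm, ← hs] at hpar
  have hzero : ‖ν - ν'‖ = 0 := by nlinarith [norm_nonneg (ν - ν')]
  have := sub_eq_zero.mp (norm_eq_zero.mp hzero)
  exact this.symm
end

section
/- Let V be an inner product space, Ω an alternating (m+1)-form on V, and suppose ν, e_1, ..., e_m is an orthonormal system with Ω of comass ≤ 1 and Ω(ν, e_1, ..., e_m) = 1. If Ω arises from an orthogonal direct sum decomposition V = V₀ ⊕ V₁ with dim V₀ = m+1 as Ω(X_1,...,X_{m+1}) = Vol₀(P(X_1),...,P(X_{m+1})), where P is the orthogonal projection onto V₀ and Vol₀ the volume form of V₀, then ν and all e_i lie in V₀. -/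
open RealInnerProductSpace

lemma mem_of_norm_proj_eq {V : Type*} [NormedAddCommGroup V] [InnerProductSpace ℝ V]
    (K : Submodule ℝ V) [CompleteSpace K] (x : V)
    (h : ‖(Submodule.orthogonalProjection K x : V)‖ = ‖x‖) : x ∈ K := by
  have hmem : x - (Submodule.orthogonalProjection K x : V) ∈ Kᗮ :=
    K.sub_starProjection_mem_orthogonal x
  have hperp : ⟪(Submodule.orthogonalProjection K x : V), x - (Submodule.orthogonalProjection K x : V)⟫ = 0 :=
    hmem _ (Submodule.orthogonalProjection K x).2
  have hsq : ‖(Submodule.orthogonalProjection K x : V) + (x - (Submodule.orthogonalProjection K x : V))‖ ^ 2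
      = ‖(Submodule.orthogonalProjection K x : V)‖ ^ 2 + 2 * ⟪(Submodule.orthogonalProjection K x : V), x - (Submodule.orthogonalProjection K x : V)⟫
      + ‖x - (Submodule.orthogonalProjection K x : V)‖ ^ 2 := norm_add_sq_real _ _
  simp only [add_sub_cancel, hperp, mul_zero, add_zero, h] at hsq
  have h0 : ‖x - (Submodule.orthogonalProjection K x : V)‖ = 0 := by
    nlinarith [norm_nonneg (x - (Submodule.orthogonalProjection K x : V))]
  have hx : x = (Submodule.orthogonalProjection K x : V) := sub_eq_zero.mp (norm_eq_zero.mp h0)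
  rw [hx]; exact (Submodule.orthogonalProjection K x).2

/-- Let `V = V₀ ⊕ V₀ᗮ` be an orthogonal decomposition of a finite-dimensional real inner
product space with `dim V₀ = m+1`, `Vol₀` the volume form of `V₀` (characterized by the
Hadamard bound `|Vol₀ v| ≤ ∏‖vᵢ‖` and `|Vol₀| = 1` on orthonormal systems), and let
`Ω(X₁,…,X_{m+1}) = Vol₀(P X₁, …, P X_{m+1})` with `P` the orthogonal projection onto `V₀`
(so `Ω` has comass `1` with calibrated subspace `V₀`).  If `ν, u₁, …, u_m` is an
orthonormal system with `Ω(ν, u₁, …, u_m) = 1`, then `ν` and all the `uᵢ` lie in `V₀`. -/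
theorem product_calibration_forces_slice
    {V : Type*} [NormedAddCommGroup V] [InnerProductSpace ℝ V] [FiniteDimensional ℝ V]
    {m : ℕ} (V₀ : Submodule ℝ V) (hdim : Module.finrank ℝ V₀ = m + 1)
    (Vol₀ : AlternatingMap ℝ V₀ ℝ (Fin (m + 1)))
    (hHadamard : ∀ v : Fin (m + 1) → V₀, |Vol₀ v| ≤ ∏ i, ‖v i‖)
    (hVolON : ∀ v : Fin (m + 1) → V₀, Orthonormal ℝ v → |Vol₀ v| = 1)
    (Ω : (Fin (m + 1) → V) → ℝ)
    (hΩ : ∀ v : Fin (m + 1) → V,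
      Ω v = Vol₀ (fun i => (Submodule.orthogonalProjection V₀ (v i) : V₀)))
    (ν : V) (u : Fin m → V)
    (hON : Orthonormal ℝ (Fin.cons ν u : Fin (m + 1) → V))
    (hcal : Ω (Fin.cons ν u) = 1) :
    ν ∈ V₀ ∧ ∀ i, u i ∈ V₀ := by
  set w : Fin (m + 1) → V := Fin.cons ν u with hw
  set p : Fin (m + 1) → V₀ := fun i => Submodule.orthogonalProjection V₀ (w i) with hp
  have hwn : ∀ i, ‖w i‖ = 1 := hON.1
  have hple : ∀ i, ‖p i‖ ≤ 1 := by
    intro i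
    calc ‖p i‖ = ‖(Submodule.orthogonalProjection V₀ : V →L[ℝ] V₀) (w i)‖ := rfl
      _ ≤ ‖(Submodule.orthogonalProjection V₀ : V →L[ℝ] V₀)‖ * ‖w i‖ :=
        ContinuousLinearMap.le_opNorm _ _
      _ ≤ 1 * 1 := by
        apply mul_le_mul (Submodule.orthogonalProjectionOnto_norm_le V₀) (le_of_eq (hwn i)) (norm_nonneg _)
        norm_num
      _ = 1 := by norm_num
  have hprod : (1 : ℝ) ≤ ∏ i, ‖p i‖ := by
    have := hHadamard p
    rw [hΩ] at hcal
    rw [show Vol₀ (fun i => (Submodule.orthogonalProjection V₀ (w i) : V₀)) = Vol₀ p from rfl] at hcal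
    rw [hcal] at this
    simpa using this
  have hpeq : ∀ i, ‖p i‖ = 1 := by
    intro i
    refine le_antisymm (hple i) ?_
    have hrest : ∏ j ∈ Finset.univ.erase i, ‖p j‖ ≤ 1 :=
      Finset.prod_le_one (fun j _ => norm_nonneg _) (fun j _ => hple j)
    have hsplit : ∏ j, ‖p j‖ = ‖p i‖ * ∏ j ∈ Finset.univ.erase i, ‖p j‖ :=
      (Finset.mul_prod_erase Finset.univ _ (Finset.mem_univ i)).symm
    nlinarith [norm_nonneg (p i), hprod]
  have hmem : ∀ i, w i ∈ V₀ := by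
    intro i
    apply mem_of_norm_proj_eq V₀ (w i)
    rw [hwn i]
    exact hpeq i
  exact ⟨hmem 0, fun i => by simpa [hw] using hmem i.succ⟩
end
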